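/- For a, b ∈ (0,1), ρ_lower(a,b) = (max(a+b−1,0) − ab)/√(a(1−a)b(1−b)) equals −1 if and only if a + b = 1. -/

import Mathlib

noncomputable def rhoLower (a b : ℝ) : ℝ :=
  (max (a + b - 1) 0 - a * b) / Real.sqrt (a * (1 - a) * b * (1 - b))

noncomputable def rhoUpper (a b : ℝ) : ℝ :=
  (min a b - a * b) / Real.sqrt (a * (1 - a) * b * (1 - b))

noncomputable def lucas (ρ u v : ℝ) : ℝ :=
  u * v + ρ * Real.sqrt (u * (1 - u) * v * (1 - v))

/-- Piecewise correlated AND operator. -/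
noncomputable def Cand (ρ u v : ℝ) : ℝ :=
  if ρ ≤ rhoLower u v then max (u + v - 1) 0
  else if rhoUpper u v ≤ ρ then min u v
  else lucas ρ u v

/-- Clipped form of the correlated AND operator. -/
noncomputable def CandClip (ρ u v : ℝ) : ℝ :=
  min (min u v) (max (max (u + v - 1) 0) (lucas ρ u v))

theorem stmt_3 (a b : ℝ) (ha : a ∈ Set.Ioo (0:ℝ) 1) (hb : b ∈ Set.Ioo (0:ℝ) 1) :
    rhoLower a b = -1 ↔ a + b = 1 := by
  obtain ⟨ha0, ha1⟩ := ha
  obtain ⟨hb0, hb1⟩ := hb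
  have hP : 0 < a * (1 - a) * b * (1 - b) := by
    have : 0 < 1 - a := by linarith
    have : 0 < 1 - b := by linarith
    positivity
  have hs : 0 < Real.sqrt (a * (1 - a) * b * (1 - b)) := Real.sqrt_pos.mpr hP
  constructor
  · intro h
    rw [rhoLower, div_eq_iff hs.ne'] at h
    by_cases hab : a + b - 1 ≤ 0
    · rw [max_eq_right hab] at h
      have hsq : Real.sqrt (a * (1 - a) * b * (1 - b)) = a * b := by nlinarith
      have := Real.sq_sqrt hP.le
      rw [hsq] at this
      nlinarith
    · push_neg at hab
      rw [max_eq_left (by linarith)] at h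
      have hsq : Real.sqrt (a * (1 - a) * b * (1 - b)) = (1 - a) * (1 - b) := by nlinarith
      have := Real.sq_sqrt hP.le
      rw [hsq] at this
      nlinarith
  · intro h
    have hb' : b = 1 - a := by linarith
    subst hb'
    have : a * (1 - a) * (1 - a) * (1 - (1 - a)) = (a * (1 - a)) ^ 2 := by ring
    rw [rhoLower, this, Real.sqrt_sq (by positivity)]
    rw [max_eq_right (by linarith)]
    field_simp
    ring
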